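/- For every integer n ≥ 1 and every real x ∈ [0, 1], one has f_n(x + 1) = −1 − f_n(x). -/

import Mathlib

/-- The ±1 Thue–Morse sequence: `u n = (-1)^(s₂(n)+1)` where `s₂` is the binary digit sum. -/
def u (n : ℕ) : ℤ := (-1) ^ ((Nat.digits 2 n).sum + 1)

/-- The "Pascal triangle" associated to the Thue–Morse sequence:
`Sig k n` is `Σ^k_n` (k the superscript, n the subscript). -/
def Sig : ℕ → ℕ → ℤ
  | k, 0 => u k
  | 0, _ + 1 => 0
  | k + 1, n + 1 => Sig k n + Sig k (n + 1)

/-- The renormalized points `x^k_n = 2^{-(n-1)(n-2)/2} Σ^k_n`. -/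
noncomputable def xkn (n k : ℕ) : ℝ := (Sig k n : ℝ) / 2 ^ ((n - 1) * (n - 2) / 2)

/-- The piecewise linear interpolation `f n` of the points `x^k_n` at `k/2^{n-1}`,
vanishing on the nonpositive reals. -/
noncomputable def f (n : ℕ) (x : ℝ) : ℝ :=
  if x ≤ 0 then 0
  else
    xkn n ⌊(2 : ℝ) ^ (n - 1) * x⌋₊ +
      (2 : ℝ) ^ (n - 1) * (x - (⌊(2 : ℝ) ^ (n - 1) * x⌋₊ : ℝ) / 2 ^ (n - 1)) *
        (xkn n (⌊(2 : ℝ) ^ (n - 1) * x⌋₊ + 1) - xkn n ⌊(2 : ℝ) ^ (n - 1) * x⌋₊)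

lemma u_zero : u 0 = -1 := by simp [u]

lemma u_one : u 1 = 1 := by norm_num [u]

lemma u_two_mul (k : ℕ) : u (2 * k) = u k := by
  rcases Nat.eq_zero_or_pos k with rfl | hk
  · rfl
  · unfold u
    rw [Nat.digits_def' (by norm_num : 1 < 2) (by omega)]
    simp [Nat.mul_div_cancel_left, Nat.mul_mod_right]

lemma u_two_mul_add_one (k : ℕ) : u (2 * k + 1) = -u k := by
  unfold u
  rw [Nat.digits_def' (by norm_num : 1 < 2) (by omega)]
  have h1 : (2 * k + 1) / 2 = k := by omega
  have h2 : (2 * k + 1) % 2 = 1 := by omega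
  rw [h1, h2]
  simp [pow_succ, pow_add]

lemma u_flip : ∀ m k : ℕ, k < 2 ^ m → u (k + 2 ^ m) = -u k := by
  intro m
  induction m with
  | zero =>
    intro k hk
    interval_cases k
    rw [show (0:ℕ) + 2 ^ 0 = 1 from rfl, u_one, u_zero]; norm_num
  | succ m ih =>
    intro k hk
    obtain ⟨q, rfl | rfl⟩ := Nat.even_or_odd' k
    · have hq : q < 2 ^ m := by
        have : 2 ^ (m + 1) = 2 * 2 ^ m := by ring
        omega
      have h : 2 * q + 2 ^ (m + 1) = 2 * (q + 2 ^ m) := by ring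
      rw [h, u_two_mul, u_two_mul, ih q hq]
    · have hq : q < 2 ^ m := by
        have : 2 ^ (m + 1) = 2 * 2 ^ m := by ring
        omega
      have h : 2 * q + 1 + 2 ^ (m + 1) = 2 * (q + 2 ^ m) + 1 := by ring
      rw [h, u_two_mul_add_one, u_two_mul_add_one, ih q hq]

lemma Sig_zero_left (n : ℕ) : Sig 0 (n + 1) = 0 := rfl

lemma Sig_succ (k n : ℕ) : Sig (k + 1) (n + 1) = Sig k n + Sig k (n + 1) := rfl

lemma Sig_zero_row (k : ℕ) : Sig k 0 = u k := by cases k <;> rfl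

/-- Antisymmetry of the rows under shift by `2^m`. -/
lemma Sig_anti : ∀ m : ℕ, ∀ j ≤ m, ∀ k < 2 ^ m + j, Sig (k + 2 ^ m) j = -Sig k j := by
  intro m
  induction m with
  | zero =>
    intro j hj
    interval_cases j
    intro k hk
    interval_cases k
    rw [show (0:ℕ) + 2 ^ 0 = 1 from rfl, Sig_zero_row, Sig_zero_row, u_one, u_zero]; norm_num
  | succ m ih =>
    intro j
    induction j with
    | zero =>
      intro _ k hk
      rw [Sig_zero_row, Sig_zero_row]
      exact u_flip (m + 1) k (by omega)
    | succ j ihj =>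
      intro hj
      have hjm : j ≤ m := by omega
      have Bj : ∀ k < 2 ^ (m + 1) + j, Sig (k + 2 ^ (m + 1)) j = -Sig k j := ihj (by omega)
      -- telescoping auxiliary
      have aux : ∀ t ≤ 2 ^ m, Sig (2 ^ m + t) (j + 1) = Sig (2 ^ m) (j + 1) - Sig t (j + 1) := by
        intro t
        induction t with
        | zero => intro _; simp [Sig_zero_left]
        | succ t iht =>
          intro ht
          have iht' := iht (by omega)
          have h1 : 2 ^ m + (t + 1) = (2 ^ m + t) + 1 := rfl
          have h2 : Sig ((2 ^ m + t) + 1) (j + 1) = Sig (2 ^ m + t) j + Sig (2 ^ m + t) (j + 1) :=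
            Sig_succ _ _
          have h3 : Sig (2 ^ m + t) j = -Sig t j := by
            have := ih j hjm t (by omega)
            rwa [Nat.add_comm t (2 ^ m)] at this
          have h4 : Sig (t + 1) (j + 1) = Sig t j + Sig t (j + 1) := Sig_succ _ _
          rw [h1, h2, h3, iht', h4]
          ring
      have Z : Sig (2 ^ (m + 1)) (j + 1) = 0 := by
        have h := aux (2 ^ m) le_rfl
        have h2 : 2 ^ m + 2 ^ m = 2 ^ (m + 1) := by ring
        rw [h2] at h
        linarith
      intro k
      induction k with
      | zero =>
        intro _
        rw [Nat.zero_add, Z, Sig_zero_left]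
        ring
      | succ k ihk =>
        intro hk
        have ihk' := ihk (by omega)
        have h1 : k + 1 + 2 ^ (m + 1) = (k + 2 ^ (m + 1)) + 1 := by ring
        have h2 : Sig ((k + 2 ^ (m + 1)) + 1) (j + 1) =
            Sig (k + 2 ^ (m + 1)) j + Sig (k + 2 ^ (m + 1)) (j + 1) := Sig_succ _ _
        have h3 : Sig (k + 2 ^ (m + 1)) j = -Sig k j := Bj k (by omega)
        have h4 : Sig (k + 1) (j + 1) = Sig k j + Sig k (j + 1) := Sig_succ _ _
        rw [h1, h2, h3, ihk', h4]
        ring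

lemma tri_succ (n : ℕ) : (n + 1) * n / 2 = n * (n - 1) / 2 + n := by
  cases n with
  | zero => rfl
  | succ n =>
    have h : (n + 2) * (n + 1) = (n + 1) * n + 2 * (n + 1) := by ring
    rw [Nat.succ_sub_one, h, Nat.add_mul_div_left _ _ (by norm_num : 0 < 2)]

/-- The main identity on `Sig`. -/
lemma Sig_key : ∀ n : ℕ, ∀ k ≤ 2 ^ n,
    Sig (k + 2 ^ n) (n + 1) = -2 ^ (n * (n - 1) / 2) - Sig k (n + 1) := by
  intro n
  induction n with
  | zero =>
    intro k hk
    interval_cases k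
    · show Sig 1 1 = -2 ^ 0 - Sig 0 1
      rw [show Sig 1 1 = Sig 0 0 + Sig 0 1 from Sig_succ 0 0, Sig_zero_row, u_zero, Sig_zero_left]
      ring
    · show Sig 2 1 = -2 ^ 0 - Sig 1 1
      rw [show Sig 2 1 = Sig 1 0 + Sig 1 1 from Sig_succ 1 0, Sig_zero_row, u_one,
        show Sig 1 1 = Sig 0 0 + Sig 0 1 from Sig_succ 0 0, Sig_zero_row, u_zero, Sig_zero_left]
      ring
  | succ n ih =>
    have aux : ∀ t ≤ 2 ^ n, Sig (2 ^ n + t) (n + 2) =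
        Sig (2 ^ n) (n + 2) - t * 2 ^ (n * (n - 1) / 2) - Sig t (n + 2) := by
      intro t
      induction t with
      | zero => intro _; simp [Sig_zero_left]
      | succ t iht =>
        intro ht
        have iht' := iht (by omega)
        have h2 : Sig ((2 ^ n + t) + 1) (n + 2) =
            Sig (2 ^ n + t) (n + 1) + Sig (2 ^ n + t) (n + 2) := Sig_succ _ _
        have h3 : Sig (2 ^ n + t) (n + 1) = -2 ^ (n * (n - 1) / 2) - Sig t (n + 1) := by
          have := ih t (by omega)
          rwa [Nat.add_comm t (2 ^ n)] at this
        have h4 : Sig (t + 1) (n + 2) = Sig t (n + 1) + Sig t (n + 2) := Sig_succ _ _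
        have h1 : 2 ^ n + (t + 1) = (2 ^ n + t) + 1 := rfl
        rw [h1, h2, h3, iht', h4]
        push_cast
        ring
    have V : Sig (2 ^ (n + 1)) (n + 2) = -2 ^ ((n + 1) * n / 2) := by
      have h := aux (2 ^ n) le_rfl
      have h2 : (2 : ℕ) ^ n + 2 ^ n = 2 ^ (n + 1) := by ring
      rw [h2] at h
      have h3 : ((2 ^ n : ℕ) : ℤ) * 2 ^ (n * (n - 1) / 2) = 2 ^ ((n + 1) * n / 2) := by
        rw [tri_succ n]
        push_cast
        ring
      rw [h3] at h
      linarith [h]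
    intro k
    induction k with
    | zero =>
      intro _
      rw [Nat.zero_add, V, Sig_zero_left, Nat.succ_sub_one]
      ring
    | succ k ihk =>
      intro hk
      have ihk' := ihk (by omega)
      have h1 : k + 1 + 2 ^ (n + 1) = (k + 2 ^ (n + 1)) + 1 := by ring
      have h2 : Sig ((k + 2 ^ (n + 1)) + 1) (n + 2) =
          Sig (k + 2 ^ (n + 1)) (n + 1) + Sig (k + 2 ^ (n + 1)) (n + 2) := Sig_succ _ _
      have h3 : Sig (k + 2 ^ (n + 1)) (n + 1) = -Sig k (n + 1) :=
        Sig_anti (n + 1) (n + 1) le_rfl k (by omega)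
      have h4 : Sig (k + 1) (n + 2) = Sig k (n + 1) + Sig k (n + 2) := Sig_succ _ _
      rw [h1, h2, h3, ihk', h4, Nat.succ_sub_one]
      ring

/-- The reflection identity on the renormalized points. -/
lemma xkn_flip (n : ℕ) (hn : 1 ≤ n) (k : ℕ) (hk : k ≤ 2 ^ (n - 1)) :
    xkn n (k + 2 ^ (n - 1)) = -1 - xkn n k := by
  obtain ⟨m, rfl⟩ : ∃ m, n = m + 1 := ⟨n - 1, by omega⟩
  have hm : m + 1 - 1 = m := rfl
  unfold xkn
  rw [hm] at hk ⊢
  have h := Sig_key m k hk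
  rw [show m + 1 - 2 = m - 1 from rfl, h]
  have hpow : (2 : ℝ) ^ (m * (m - 1) / 2) ≠ 0 := by positivity
  push_cast
  field_simp

theorem f_reflection (n : ℕ) (hn : 1 ≤ n) (x : ℝ) (hx : x ∈ Set.Icc (0 : ℝ) 1) :
    f n (x + 1) = -1 - f n x := by
  obtain ⟨hx0, hx1⟩ := hx
  have hcast : ((2 ^ (n - 1) : ℕ) : ℝ) = (2 : ℝ) ^ (n - 1) := by push_cast; ring
  have hP : (0 : ℝ) < (2 : ℝ) ^ (n - 1) := by positivity
  have hxkn0 : xkn n 0 = 0 := by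
    obtain ⟨m, rfl⟩ : ∃ m, n = m + 1 := ⟨n - 1, by omega⟩
    unfold xkn
    rw [Sig_zero_left]
    simp
  rcases eq_or_lt_of_le hx0 with rfl | hx0'
  · -- x = 0
    have hf0 : f n 0 = 0 := by simp [f]
    have hfloor : ⌊(2 : ℝ) ^ (n - 1) * (0 + 1)⌋₊ = 2 ^ (n - 1) := by
      rw [show (2 : ℝ) ^ (n - 1) * (0 + 1) = ((2 ^ (n - 1) : ℕ) : ℝ) by rw [hcast]; ring,
        Nat.floor_natCast]
    have hf1 : f n (0 + 1) = xkn n (2 ^ (n - 1)) := by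
      rw [f, if_neg (by norm_num), hfloor, hcast, div_self (ne_of_gt hP)]
      ring
    rw [hf0, hf1]
    have := xkn_flip n hn 0 (by positivity)
    rw [Nat.zero_add] at this
    rw [this, hxkn0]
  rcases eq_or_lt_of_le hx1 with rfl | hx1'
  · -- x = 1
    have hfloor1 : ⌊(2 : ℝ) ^ (n - 1) * 1⌋₊ = 2 ^ (n - 1) := by
      rw [mul_one, ← hcast, Nat.floor_natCast]
    have hfloor2 : ⌊(2 : ℝ) ^ (n - 1) * (1 + 1)⌋₊ = 2 ^ (n - 1) + 2 ^ (n - 1) := by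
      rw [show (2 : ℝ) ^ (n - 1) * (1 + 1) = ((2 ^ (n - 1) + 2 ^ (n - 1) : ℕ) : ℝ) by
        push_cast; ring, Nat.floor_natCast]
    have hf1 : f n 1 = xkn n (2 ^ (n - 1)) := by
      rw [f, if_neg (by norm_num), hfloor1, hcast, div_self (ne_of_gt hP)]
      ring
    have hf2 : f n (1 + 1) = xkn n (2 ^ (n - 1) + 2 ^ (n - 1)) := by
      rw [f, if_neg (by norm_num), hfloor2]
      rw [show (((2 ^ (n-1) + 2 ^ (n-1) : ℕ)) : ℝ) = 2 * (2:ℝ) ^ (n-1) by push_cast; ring,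
        mul_div_assoc, div_self (ne_of_gt hP)]
      ring
    rw [hf1, hf2, xkn_flip n hn (2 ^ (n - 1)) le_rfl]
  -- 0 < x < 1
  set k := ⌊(2 : ℝ) ^ (n - 1) * x⌋₊ with hk
  have hk_lt : k < 2 ^ (n - 1) := by
    have : (2 : ℝ) ^ (n - 1) * x < (2 : ℝ) ^ (n - 1) := by nlinarith
    have h2 : (k : ℝ) < ((2 ^ (n - 1) : ℕ) : ℝ) := by
      calc (k : ℝ) ≤ (2 : ℝ) ^ (n - 1) * x := Nat.floor_le (by positivity)
        _ < (2 : ℝ) ^ (n - 1) := this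
        _ = _ := hcast.symm
    exact_mod_cast h2
  have hfloor : ⌊(2 : ℝ) ^ (n - 1) * (x + 1)⌋₊ = k + 2 ^ (n - 1) := by
    rw [show (2 : ℝ) ^ (n - 1) * (x + 1) = (2 : ℝ) ^ (n - 1) * x + (2 ^ (n - 1) : ℕ) by
      rw [hcast]; ring]
    rw [Nat.floor_add_natCast (by positivity)]
  have e1 : xkn n (k + 2 ^ (n - 1)) = -1 - xkn n k := xkn_flip n hn k (by omega)
  have e2 : xkn n (k + 2 ^ (n - 1) + 1) = -1 - xkn n (k + 1) := by
    have := xkn_flip n hn (k + 1) (by omega)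
    rw [show k + 1 + 2 ^ (n - 1) = k + 2 ^ (n - 1) + 1 by ring] at this
    exact this
  have hfx : f n x = xkn n k +
      (2 : ℝ) ^ (n - 1) * (x - (k : ℝ) / 2 ^ (n - 1)) * (xkn n (k + 1) - xkn n k) := by
    rw [f, if_neg (by linarith)]
  have hfx1 : f n (x + 1) = xkn n (k + 2 ^ (n - 1)) +
      (2 : ℝ) ^ (n - 1) * (x - (k : ℝ) / 2 ^ (n - 1)) *
        (xkn n (k + 2 ^ (n - 1) + 1) - xkn n (k + 2 ^ (n - 1))) := by
    rw [f, if_neg (by linarith), hfloor]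
    have : (x + 1) - ((k + 2 ^ (n - 1) : ℕ) : ℝ) / 2 ^ (n - 1) = x - (k : ℝ) / 2 ^ (n - 1) := by
      push_cast
      field_simp
      ring
    rw [this]
  rw [hfx1, hfx, e1, e2]
  ring
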